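/- Let (X, 𝓑, μ, f) be a dissipative system of bounded distortion generated by W, with f bijective and both f and f⁻¹ satisfying condition (⋆), and let 1 ≤ p < ∞. If condition 𝓗𝓓 holds, i.e. liminf_{n→∞} inf_{k∈ℤ} (μ(f^k(W))/μ(f^{k+n}(W)))^{1/n} > 1, then the composition operator T_f on L^p(X, μ) is a dilation, i.e. its inverse T_f⁻¹ = T_{f⁻¹} has spectral radius strictly less than 1. -/

import Mathlib

open MeasureTheory Filter Set Function Topology ENNReal

noncomputable section

namespace GHShadow

/-- The shadowing property for an invertible bounded linear operator. -/
def HasShadowing {E : Type*} [NormedAddCommGroup E] [NormedSpace ℝ E]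
    (T : E ≃L[ℝ] E) : Prop :=
  ∀ ε : ℝ, 0 < ε → ∃ δ : ℝ, 0 < δ ∧ ∀ x : ℤ → E,
    (∀ n : ℤ, ‖T (x n) - x (n + 1)‖ ≤ δ) →
      ∃ y : E, ∀ n : ℤ, ‖(T ^ n) y - x n‖ < ε

/-- `lim ‖Tⁿ‖^{1/n}` exists and is `< 1`. -/
def SpectralRadiusLtOne {E : Type*} [NormedAddCommGroup E] [NormedSpace ℝ E]
    (T : E →L[ℝ] E) : Prop :=
  ∃ r : ℝ, r < 1 ∧ Tendsto (fun n : ℕ => ‖T ^ n‖ ^ (1 / (n : ℝ))) atTop (nhds r)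

/-- The restriction of `T` to `M` has spectral radius `< 1`
(equivalently, is a proper contraction in an equivalent norm). -/
def ContractsOn {E : Type*} [NormedAddCommGroup E] [NormedSpace ℝ E]
    (T : E ≃L[ℝ] E) (M : Submodule ℝ E) : Prop :=
  ∃ C : ℝ, 0 < C ∧ ∃ t : ℝ, 0 < t ∧ t < 1 ∧
    ∀ n : ℕ, ∀ x ∈ M, ‖(T ^ n) x‖ ≤ C * t ^ n * ‖x‖

def GeneralizedHyperbolic {E : Type*} [NormedAddCommGroup E] [NormedSpace ℝ E]
    (T : E ≃L[ℝ] E) : Prop :=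
  ∃ M N : Submodule ℝ E, IsClosed (M : Set E) ∧ IsClosed (N : Set E) ∧
    IsCompl M N ∧ (∀ x ∈ M, T x ∈ M) ∧ (∀ x ∈ N, T.symm x ∈ N) ∧
    ContractsOn T M ∧ ContractsOn T.symm N

variable {X : Type*} [MeasurableSpace X]

/-- image of `B` under the `k`-th iterate of the invertible map `f`. -/
def img (f : Equiv.Perm X) (k : ℤ) (B : Set X) : Set X := ⇑(f ^ k) '' B

/-- `(X, 𝓑, μ, f)` is a dissipative system generated by `W`. -/
structure IsDissipative (μ : Measure X) (f : Equiv.Perm X) (W : Set X) : Prop where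
  sigmaFin : SigmaFinite μ
  meas_f : Measurable f
  meas_symm : Measurable f.symm
  meas_W : MeasurableSet W
  pos : 0 < μ W
  fin : μ W < ⊤
  disj : Pairwise fun k l : ℤ => Disjoint (img f k W) (img f l W)
  cover : (⋃ k : ℤ, img f k W) = univ

/-- `f` is of bounded distortion on `W` with constant `K`. -/
def BoundedDistortion (μ : Measure X) (f : Equiv.Perm X) (W : Set X) (K : ℝ≥0∞) : Prop :=
  ∀ k : ℤ, ∀ B : Set X, MeasurableSet B → B ⊆ W →
    (1 / K) * (μ (img f k W) * μ B) ≤ μ (img f k B) * μ W ∧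
      μ (img f k B) * μ W ≤ K * (μ (img f k W) * μ B)

/-- condition (⋆) for a transformation `g`. -/
def CondStar (μ : Measure X) (g : X → X) : Prop :=
  ∃ c : ℝ≥0∞, 0 < c ∧ c ≠ ⊤ ∧ ∀ B : Set X, MeasurableSet B → μ (g ⁻¹' B) ≤ c * μ B

/-- condition 𝓗𝓒. -/
def CondHC (μ : Measure X) (f : Equiv.Perm X) (W : Set X) : Prop :=
  limsup (fun n : ℕ =>
    ⨆ k : ℤ, (μ (img f k W) / μ (img f (k + (n : ℤ)) W)) ^ (1 / (n : ℝ))) atTop < 1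

/-- condition 𝓗𝓓. -/
def CondHD (μ : Measure X) (f : Equiv.Perm X) (W : Set X) : Prop :=
  1 < liminf (fun n : ℕ =>
    ⨅ k : ℤ, (μ (img f k W) / μ (img f (k + (n : ℤ)) W)) ^ (1 / (n : ℝ))) atTop

/-- condition 𝓖𝓗. -/
def CondGH (μ : Measure X) (f : Equiv.Perm X) (W : Set X) : Prop :=
  limsup (fun n : ℕ =>
      ⨆ m : ℕ, (μ (img f (-(m : ℤ) - (n : ℤ)) W) / μ (img f (-(m : ℤ)) W)) ^ (1 / (n : ℝ)))
      atTop < 1 ∧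
  1 < liminf (fun n : ℕ =>
      ⨅ m : ℕ, (μ (img f (m : ℤ) W) / μ (img f ((m : ℤ) + (n : ℤ)) W)) ^ (1 / (n : ℝ))) atTop

/-- `T` represents the composition operator `φ ↦ φ ∘ f` on `L^p(X,μ)`. -/
def RepsComp (μ : Measure X) (p : ℝ≥0∞) [Fact (1 ≤ p)] (f : X → X)
    (T : Lp ℝ p μ ≃L[ℝ] Lp ℝ p μ) : Prop :=
  ∀ φ : Lp ℝ p μ, ⇑(T φ) =ᵐ[μ] fun x => (φ : X → ℝ) (f x)


/-! ### Auxiliary lemmas -/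

section Aux

variable {μ : Measure X} {f : Equiv.Perm X} {W : Set X}

lemma meas_perm_pow {g : Equiv.Perm X} (hg : Measurable g) : ∀ n : ℕ, Measurable ⇑(g ^ n)
  | 0 => by simp only [pow_zero, Equiv.Perm.coe_one]; exact measurable_id
  | (n + 1) => by
      have h : ⇑(g ^ (n + 1)) = ⇑(g ^ n) ∘ ⇑g := by
        ext x; simp [pow_succ, Equiv.Perm.mul_apply]
      rw [h]; exact (meas_perm_pow hg n).comp hg

lemma meas_perm_zpow (hf : Measurable f) (hf' : Measurable f.symm) :
    ∀ k : ℤ, Measurable ⇑(f ^ k)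
  | Int.ofNat n => by
      show Measurable ⇑(f ^ (n : ℤ))
      rw [zpow_natCast]; exact meas_perm_pow hf n
  | Int.negSucc n => by
      rw [zpow_negSucc, ← inv_pow, Equiv.Perm.inv_def]
      exact meas_perm_pow hf' (n + 1)

lemma perm_zpow_symm (f : Equiv.Perm X) (k : ℤ) : (f ^ k).symm = f ^ (-k) := by
  rw [zpow_neg, Equiv.Perm.inv_def]

lemma meas_perm_zpow_symm (hf : Measurable f) (hf' : Measurable f.symm) (k : ℤ) :
    Measurable ⇑((f ^ k).symm) := by
  rw [perm_zpow_symm]; exact meas_perm_zpow hf hf' (-k)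

lemma measurableSet_img (hf : Measurable f) (hf' : Measurable f.symm) {B : Set X}
    (hB : MeasurableSet B) (k : ℤ) : MeasurableSet (img f k B) := by
  rw [img, Equiv.image_eq_preimage_symm]
  exact meas_perm_zpow_symm hf hf' k hB

lemma img_img (f : Equiv.Perm X) (a b : ℤ) (B : Set X) :
    img f a (img f b B) = img f (a + b) B := by
  simp only [img, ← Set.image_comp]
  congr 1
  ext x
  simp [zpow_add, Equiv.Perm.mul_apply]

lemma img_zero (f : Equiv.Perm X) (B : Set X) : img f 0 B = B := by
  simp [img]

lemma img_ne_zero_top (hdiss : IsDissipative μ f W) (hstar : CondStar μ f)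
    (hstar' : CondStar μ f.symm) :
    ∀ k : ℤ, μ (img f k W) ≠ 0 ∧ μ (img f k W) ≠ ⊤ := by
  obtain ⟨c, hc0, hct, hc⟩ := hstar
  obtain ⟨c', hc'0, hc't, hc'⟩ := hstar'
  have hfm := hdiss.meas_f; have hsm := hdiss.meas_symm
  have hmeas : ∀ k : ℤ, MeasurableSet (img f k W) :=
    fun k => measurableSet_img hfm hsm hdiss.meas_W k
  have hup : ∀ k : ℤ, img f (k + 1) W = ⇑f.symm ⁻¹' (img f k W) := by
    intro k
    have h1 : img f (k + 1) W = img f 1 (img f k W) := by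
      rw [img_img]; ring_nf
    rw [h1, img, zpow_one, Equiv.image_eq_preimage_symm]
  have hdown : ∀ k : ℤ, img f (k - 1) W = ⇑f ⁻¹' (img f k W) := by
    intro k
    have h1 : img f (k - 1) W = img f (-1) (img f k W) := by
      rw [img_img]; ring_nf
    rw [h1, img]
    have h2 : (f ^ (-1 : ℤ)) = f.symm := by
      rw [zpow_neg, zpow_one, Equiv.Perm.inv_def]
    rw [h2, Equiv.image_eq_preimage_symm, Equiv.symm_symm]
  intro k
  induction k using Int.induction_on with
  | zero => rw [img_zero]; exact ⟨hdiss.pos.ne', hdiss.fin.ne⟩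
  | succ k ih =>
      constructor
      · intro h0
        apply ih.1
        have h1 : μ (img f (k : ℤ) W) ≤ c * μ (img f ((k : ℤ) + 1) W) := by
          have h2 : img f ((k : ℤ) + 1 - 1) W = ⇑f ⁻¹' (img f ((k : ℤ) + 1) W) :=
            hdown ((k : ℤ) + 1)
          simp only [add_sub_cancel_right] at h2
          rw [h2]
          exact hc _ (hmeas _)
        rw [h0, mul_zero] at h1
        exact le_antisymm h1 (zero_le)
      · intro h0
        have h1 : μ (img f ((k : ℤ) + 1) W) ≤ c' * μ (img f (k : ℤ) W) := by
          rw [hup]; exact hc' _ (hmeas _)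
        rw [h0] at h1
        exact (ENNReal.mul_ne_top hc't ih.2) (le_antisymm le_top (le_trans le_rfl h1) ▸ rfl)
  | pred k ih =>
      constructor
      · intro h0
        apply ih.1
        have h1 : μ (img f (-(k : ℤ)) W) ≤ c' * μ (img f (-(k : ℤ) - 1) W) := by
          have h2 : img f (-(k : ℤ) - 1 + 1) W = ⇑f.symm ⁻¹' (img f (-(k : ℤ) - 1) W) :=
            hup (-(k : ℤ) - 1)
          simp only [sub_add_cancel] at h2
          rw [h2]
          exact hc' _ (hmeas _)
        rw [h0, mul_zero] at h1
        exact le_antisymm h1 (zero_le)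
      · intro h0
        have h1 : μ (img f (-(k : ℤ) - 1) W) ≤ c * μ (img f (-(k : ℤ)) W) := by
          rw [hdown]; exact hc _ (hmeas _)
        rw [h0] at h1
        exact (ENNReal.mul_ne_top hct ih.2) (le_antisymm le_top (le_trans le_rfl h1) ▸ rfl)

/-- The key measure estimate: if `μ(f^{k+n} W) ≤ Cₙ μ(f^k W)` for all `k`, then
`μ(f^n B) ≤ K² Cₙ μ(B)` for every measurable `B`. -/
lemma map_bound (hdiss : IsDissipative μ f W) {K : ℝ≥0∞} (hK0 : K ≠ 0) (hKt : K ≠ ⊤)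
    (hbd : BoundedDistortion μ f W K)
    {n : ℕ} {Cn : ℝ≥0∞} (hCn : ∀ k : ℤ, μ (img f (k + (n : ℤ)) W) ≤ Cn * μ (img f k W))
    {B : Set X} (hB : MeasurableSet B) :
    μ (img f (n : ℤ) B) ≤ K ^ 2 * Cn * μ B := by
  have hfm := hdiss.meas_f; have hsm := hdiss.meas_symm
  have hAm : ∀ k : ℤ, MeasurableSet (img f k W) :=
    fun k => measurableSet_img hfm hsm hdiss.meas_W k
  have hBk_m : ∀ k : ℤ, MeasurableSet (B ∩ img f k W) := fun k => hB.inter (hAm k)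
  have hBdecomp : B = ⋃ k : ℤ, (B ∩ img f k W) := by
    rw [← inter_iUnion, hdiss.cover, inter_univ]
  have hpiece : ∀ k : ℤ, μ (img f (n : ℤ) (B ∩ img f k W)) ≤
      K ^ 2 * Cn * μ (B ∩ img f k W) := by
    intro k
    set Bk := B ∩ img f k W with hBkdef
    have hBkA : Bk ⊆ img f k W := inter_subset_right
    set B' := img f (-k) Bk with hB'
    have hB'm : MeasurableSet B' := measurableSet_img hfm hsm (hBk_m k) (-k)
    have hB'W : B' ⊆ W := by
      calc B' ⊆ img f (-k) (img f k W) := Set.image_mono hBkA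
        _ = W := by rw [img_img, neg_add_cancel, img_zero]
    have hkB' : img f k B' = Bk := by
      rw [hB', img_img]
      have h1 : k + -k = 0 := by ring
      rw [h1, img_zero]
    have hknB' : img f (k + (n : ℤ)) B' = img f (n : ℤ) Bk := by
      rw [hB', img_img]
      have h1 : k + (n : ℤ) + -k = (n : ℤ) := by ring
      rw [h1]
    obtain ⟨hlo, -⟩ := hbd k B' hB'm hB'W
    obtain ⟨-, hhi⟩ := hbd (k + (n : ℤ)) B' hB'm hB'W
    rw [hkB'] at hlo
    rw [hknB'] at hhi
    have h4 : μ (img f k W) * μ B' ≤ K * (μ Bk * μ W) := by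
      have h5 := mul_le_mul_right hlo K
      rwa [← mul_assoc, one_div, ENNReal.mul_inv_cancel hK0 hKt, one_mul] at h5
    have h6 : μ (img f (n : ℤ) Bk) * μ W ≤ (K ^ 2 * Cn * μ Bk) * μ W := by
      calc μ (img f (n : ℤ) Bk) * μ W ≤ K * (μ (img f (k + (n : ℤ)) W) * μ B') := hhi
        _ ≤ K * ((Cn * μ (img f k W)) * μ B') := by gcongr; exact hCn k
        _ = K * Cn * (μ (img f k W) * μ B') := by ring
        _ ≤ K * Cn * (K * (μ Bk * μ W)) := by gcongr
        _ = (K ^ 2 * Cn * μ Bk) * μ W := by ring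
    exact (ENNReal.mul_le_mul_iff_left hdiss.pos.ne' hdiss.fin.ne).mp h6
  have himg : img f (n : ℤ) B = ⋃ k : ℤ, img f (n : ℤ) (B ∩ img f k W) := by
    conv_lhs => rw [hBdecomp]
    rw [img, Set.image_iUnion]
    rfl
  have hsum : ∑' k : ℤ, μ (B ∩ img f k W) = μ B := by
    rw [← measure_iUnion ?_ hBk_m, ← hBdecomp]
    intro i j hij
    exact ((hdiss.disj hij).mono inter_subset_right inter_subset_right)
  calc μ (img f (n : ℤ) B) ≤ ∑' k : ℤ, μ (img f (n : ℤ) (B ∩ img f k W)) := by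
        rw [himg]; exact measure_iUnion_le _
    _ ≤ ∑' k : ℤ, K ^ 2 * Cn * μ (B ∩ img f k W) := ENNReal.tsum_le_tsum hpiece
    _ = K ^ 2 * Cn * ∑' k : ℤ, μ (B ∩ img f k W) := ENNReal.tsum_mul_left
    _ = K ^ 2 * Cn * μ B := by rw [hsum]

lemma null_preimage {g : X → X} {c : ℝ≥0∞} (hc : ∀ B : Set X, MeasurableSet B → μ (g ⁻¹' B) ≤ c * μ B)
    {s : Set X} (hs : μ s = 0) : μ (g ⁻¹' s) = 0 := by
  obtain ⟨t, hst, htm, ht0⟩ := exists_measurable_superset_of_null hs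
  refine le_antisymm ?_ (zero_le)
  calc μ (g ⁻¹' s) ≤ μ (g ⁻¹' t) := measure_mono (Set.preimage_mono hst)
    _ ≤ c * μ t := hc t htm
    _ = 0 := by rw [ht0, mul_zero]

lemma ae_comp_of_null {g : X → X} (hg0 : ∀ s : Set X, μ s = 0 → μ (g ⁻¹' s) = 0)
    {u v : X → ℝ} (h : u =ᵐ[μ] v) : u ∘ g =ᵐ[μ] v ∘ g := by
  rw [Filter.EventuallyEq, ae_iff] at h ⊢
  have he : {x | ¬ (u ∘ g) x = (v ∘ g) x} = g ⁻¹' {x | ¬ u x = v x} := rfl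
  rw [he]
  exact hg0 _ h

lemma null_perm_pow {σ : Equiv.Perm X} (h : ∀ s : Set X, μ s = 0 → μ (⇑σ ⁻¹' s) = 0) :
    ∀ n : ℕ, ∀ s : Set X, μ s = 0 → μ (⇑(σ ^ n) ⁻¹' s) = 0
  | 0, s, hs => by
      simp only [pow_zero, Equiv.Perm.coe_one, Set.preimage_id]; exact hs
  | n + 1, s, hs => by
      have hcomp : ⇑(σ ^ (n + 1)) = ⇑σ ∘ ⇑(σ ^ n) := by
        ext x; simp [pow_succ', Equiv.Perm.mul_apply]
      rw [hcomp, Set.preimage_comp]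
      exact null_perm_pow h n _ (h s hs)

end Aux

/-- Theorem SS, part 2: if condition 𝓗𝓓 holds, then the composition
operator `T_f` on `L^p(X,μ)` is a dilation, i.e. its inverse `T_f⁻¹ = T_{f⁻¹}` has
spectral radius `< 1`. -/
theorem dilation_of_condHD
    {X : Type*} [MeasurableSpace X] (μ : Measure X) (f : Equiv.Perm X) (W : Set X)
    (p : ℝ≥0∞) [Fact (1 ≤ p)] (hp : p ≠ ⊤)
    (hdiss : IsDissipative μ f W)
    (K : ℝ≥0∞) (hK0 : 0 < K) (hKfin : K ≠ ⊤)
    (hbd : BoundedDistortion μ f W K)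
    (hstar : CondStar μ f) (hstar' : CondStar μ f.symm)
    (T : Lp ℝ p μ ≃L[ℝ] Lp ℝ p μ) (hT : RepsComp μ p f T)
    (hHD : CondHD μ f W) :
    SpectralRadiusLtOne (T.symm : Lp ℝ p μ →L[ℝ] Lp ℝ p μ) := by
  classical
  have hp1 : 1 ≤ p := Fact.out
  have hp0 : p ≠ 0 := (lt_of_lt_of_le zero_lt_one hp1).ne'
  have hpt : 0 < p.toReal := ENNReal.toReal_pos hp0 hp
  have hfm := hdiss.meas_f
  have hsm := hdiss.meas_symm
  obtain ⟨c', hc'0, hc't, hc'⟩ := hstar'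
  set M : Lp ℝ p μ →L[ℝ] Lp ℝ p μ := (T.symm : Lp ℝ p μ →L[ℝ] Lp ℝ p μ) with hM
  set Tc : Lp ℝ p μ →L[ℝ] Lp ℝ p μ := (T : Lp ℝ p μ →L[ℝ] Lp ℝ p μ) with hTc
  -- the nonzero element
  set φ₀ : Lp ℝ p μ := indicatorConstLp p hdiss.meas_W hdiss.fin.ne (1 : ℝ) with hφ₀def
  have hφ₀ : φ₀ ≠ 0 := by
    have hn : ‖φ₀‖ = ‖(1 : ℝ)‖ * (μ W).toReal ^ (1 / p.toReal) :=
      norm_indicatorConstLp hp0 hp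
    have hpos : 0 < ‖φ₀‖ := by
      rw [hn, norm_one, one_mul]
      exact Real.rpow_pos_of_pos (ENNReal.toReal_pos hdiss.pos.ne' hdiss.fin.ne) _
    exact norm_pos_iff.mp hpos
  haveI : Nontrivial (Lp ℝ p μ) := nontrivial_of_ne φ₀ 0 hφ₀
  -- cancellation
  have hcancel : ∀ n : ℕ, ∀ ψ : Lp ℝ p μ, (Tc ^ n) ((M ^ n) ψ) = ψ := by
    intro n
    induction n with
    | zero => intro ψ; simp
    | succ n ih =>
        intro ψ
        rw [pow_succ' M, pow_succ Tc]
        simp only [ContinuousLinearMap.mul_apply]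
        have h1 : Tc (M ((M ^ n) ψ)) = (M ^ n) ψ := by
          simp [hM, hTc]
        rw [h1]
        exact ih ψ
  have hMn_pos : ∀ n : ℕ, 0 < ‖M ^ n‖ := by
    intro n
    rw [norm_pos_iff]
    intro h
    apply hφ₀
    have := hcancel n φ₀
    rw [h] at this
    simpa using this.symm
  -- a.e. representation of powers of M
  have hnull : ∀ s : Set X, μ s = 0 → μ (⇑f.symm ⁻¹' s) = 0 :=
    fun s hs => null_preimage hc' hs
  have hbase : ∀ ψ : Lp ℝ p μ, ⇑(M ψ) =ᵐ[μ] ⇑ψ ∘ ⇑f.symm := by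
    intro ψ
    have h2 := hT (T.symm ψ)
    rw [T.apply_symm_apply] at h2
    have h3 : (fun x => (⇑(T.symm ψ) : X → ℝ) (f x)) = ⇑(T.symm ψ) ∘ ⇑f := rfl
    rw [h3] at h2
    have h4 : ⇑ψ ∘ ⇑f.symm =ᵐ[μ] (⇑(T.symm ψ) ∘ ⇑f) ∘ ⇑f.symm := ae_comp_of_null hnull h2
    have h5 : (⇑(T.symm ψ) ∘ ⇑f) ∘ ⇑f.symm = ⇑(T.symm ψ) := by
      funext x; simp
    rw [h5] at h4
    exact h4.symm
  have hcomp : ∀ n : ℕ, ∀ ψ : Lp ℝ p μ, ⇑((M ^ n) ψ) =ᵐ[μ] ⇑ψ ∘ ⇑(f.symm ^ n) := by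
    intro n
    induction n with
    | zero =>
        intro ψ
        simp only [pow_zero, ContinuousLinearMap.one_apply, Equiv.Perm.coe_one]
        exact Filter.EventuallyEq.rfl
    | succ n ih =>
        intro ψ
        have h1 : (M ^ (n + 1)) ψ = (M ^ n) (M ψ) := by
          rw [pow_succ]; rfl
        rw [h1]
        refine (ih (M ψ)).trans ?_
        have h2 : ⇑(M ψ) ∘ ⇑(f.symm ^ n) =ᵐ[μ] (⇑ψ ∘ ⇑f.symm) ∘ ⇑(f.symm ^ n) :=
          ae_comp_of_null (null_perm_pow hnull n) (hbase ψ)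
        refine h2.trans ?_
        have h3 : (⇑ψ ∘ ⇑f.symm) ∘ ⇑(f.symm ^ n) = ⇑ψ ∘ ⇑(f.symm ^ (n + 1)) := by
          funext x; simp [pow_succ', Equiv.Perm.mul_apply]
        rw [h3]
  -- extract the constant from condition HD
  set F : ℕ → ℝ≥0∞ := fun n =>
    ⨅ k : ℤ, (μ (img f k W) / μ (img f (k + (n : ℤ)) W)) ^ (1 / (n : ℝ)) with hF
  obtain ⟨b, hb1, hb2⟩ := exists_between (lt_min one_lt_two hHD)
  have hbL : b < liminf F atTop := lt_of_lt_of_le hb2 (min_le_right _ _)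
  have hbt : b ≠ ⊤ := ((lt_of_lt_of_le hb2 (min_le_left _ _)).trans_le le_top).ne
  have hb0 : b ≠ 0 := (lt_trans zero_lt_one hb1).ne'
  have hbfin : b < ⊤ := lt_of_lt_of_le hb2 (min_le_left _ _) |>.trans_le (le_top)
  have hev : ∀ᶠ n : ℕ in atTop, b < F n := eventually_lt_of_lt_liminf hbL
  have hWk := img_ne_zero_top hdiss hstar ⟨c', hc'0, hc't, hc'⟩
  -- eventual per-n measure bound
  set D : ℕ → ℝ≥0∞ := fun n => K ^ 2 * (b⁻¹) ^ n with hD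
  have hDn_ne_top : ∀ n, D n ≠ ⊤ := by
    intro n
    refine ENNReal.mul_ne_top (ENNReal.pow_ne_top hKfin) (ENNReal.pow_ne_top ?_)
    simp [ENNReal.inv_ne_top, hb0]
  have hDev : ∀ᶠ n : ℕ in atTop, ∀ B : Set X, MeasurableSet B →
      μ (img f (n : ℤ) B) ≤ D n * μ B := by
    filter_upwards [hev, eventually_ge_atTop 1] with n hn hn1
    intro B hB
    have hCn : ∀ k : ℤ, μ (img f (k + (n : ℤ)) W) ≤ (b⁻¹) ^ n * μ (img f k W) := by
      intro k
      have h1 : b ≤ (μ (img f k W) / μ (img f (k + (n : ℤ)) W)) ^ (1 / (n : ℝ)) :=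
        hn.le.trans (iInf_le _ k)
      have hn0 : (n : ℝ) ≠ 0 := by
        exact_mod_cast (Nat.one_le_iff_ne_zero.mp hn1)
      have h2 : b ^ (n : ℝ) ≤
          ((μ (img f k W) / μ (img f (k + (n : ℤ)) W)) ^ (1 / (n : ℝ))) ^ (n : ℝ) :=
        ENNReal.rpow_le_rpow h1 (by positivity)
      rw [← ENNReal.rpow_mul, one_div_mul_cancel hn0, ENNReal.rpow_one,
        ENNReal.rpow_natCast] at h2
      have h3 : b ^ n * μ (img f (k + (n : ℤ)) W) ≤ μ (img f k W) :=
        (ENNReal.le_div_iff_mul_le (Or.inl (hWk _).1) (Or.inl (hWk _).2)).mp h2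
      have hbn0 : b ^ n ≠ 0 := pow_ne_zero n hb0
      have hbnt : b ^ n ≠ ⊤ := ENNReal.pow_ne_top hbt
      calc μ (img f (k + (n : ℤ)) W)
          = (b ^ n)⁻¹ * (b ^ n * μ (img f (k + (n : ℤ)) W)) := by
            rw [← mul_assoc, ENNReal.inv_mul_cancel hbn0 hbnt, one_mul]
        _ ≤ (b ^ n)⁻¹ * μ (img f k W) := mul_le_mul_right h3 _
        _ = (b⁻¹) ^ n * μ (img f k W) := by rw [← ENNReal.inv_pow]
    exact map_bound hdiss hK0.ne' hKfin hbd hCn hB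
  -- D n tends to 0
  have hbinv : b⁻¹ < 1 := ENNReal.inv_lt_one.mpr hb1
  have htend : Filter.Tendsto D atTop (nhds 0) := by
    have h0 := ENNReal.tendsto_pow_atTop_nhds_zero_of_lt_one hbinv
    have h1 := ENNReal.Tendsto.const_mul (a := K ^ 2) h0
      (Or.inr (ENNReal.pow_ne_top hKfin))
    simpa [hD] using h1
  have hDlt : ∀ᶠ n : ℕ in atTop, D n < 1 :=
    htend.eventually (gt_mem_nhds zero_lt_one)
  -- eventual operator norm bound
  set e : ℝ := (1 / p).toReal with he
  have he_pos : 0 < e := by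
    rw [he, one_div, ENNReal.toReal_inv]
    exact inv_pos.mpr hpt
  have hnormEv : ∀ᶠ n : ℕ in atTop, ‖M ^ n‖ ≤ ((D n) ^ e).toReal ∧ ((D n) ^ e).toReal < 1 := by
    filter_upwards [hDev, hDlt] with n hDn hDn1
    have hDe_ne_top : (D n) ^ e ≠ ⊤ :=
      ENNReal.rpow_ne_top_of_nonneg he_pos.le (hDn_ne_top n)
    constructor
    · -- norm bound
      set σ : Equiv.Perm X := f.symm ^ n with hσ
      have hσm : Measurable ⇑σ := meas_perm_pow hsm n
      have hσsymm : σ = (f ^ n).symm := by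
        rw [hσ, ← Equiv.Perm.inv_def f, ← Equiv.Perm.inv_def (f ^ n), inv_pow]
      have hpre : ∀ s : Set X, ⇑σ ⁻¹' s = img f (n : ℤ) s := by
        intro s
        rw [img, zpow_natCast, Equiv.image_eq_preimage_symm, ← hσsymm]
      have hmap : Measure.map ⇑σ μ ≤ (D n) • μ := by
        refine Measure.le_iff.mpr ?_
        intro s hs
        rw [Measure.map_apply hσm hs, Measure.smul_apply, smul_eq_mul, hpre]
        exact hDn s hs
      have hmapac : Measure.map ⇑σ μ ≪ μ := by
        refine Measure.AbsolutelyContinuous.mk ?_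
        intro s hs hs0
        refine le_antisymm ?_ (zero_le)
        calc Measure.map ⇑σ μ s ≤ ((D n) • μ) s := le_iff_le_of_cmp_eq_cmp rfl |>.mp (hmap s)
          _ = D n * μ s := by rw [Measure.smul_apply, smul_eq_mul]
          _ = 0 := by rw [hs0, mul_zero]
      refine ContinuousLinearMap.opNorm_le_bound _ ENNReal.toReal_nonneg ?_
      intro ψ
      have hae := hcomp n ψ
      have h1 : ‖(M ^ n) ψ‖ = (eLpNorm (⇑ψ ∘ ⇑σ) p μ).toReal := by
        rw [Lp.norm_def, eLpNorm_congr_ae hae]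
      have h2 : eLpNorm (⇑ψ ∘ ⇑σ) p μ = eLpNorm (⇑ψ) p (Measure.map ⇑σ μ) :=
        (eLpNorm_map_measure ((Lp.aestronglyMeasurable ψ).mono_ac hmapac)
          hσm.aemeasurable).symm
      have h3 : eLpNorm (⇑ψ) p (Measure.map ⇑σ μ) ≤ eLpNorm (⇑ψ) p ((D n) • μ) :=
        eLpNorm_mono_measure _ hmap
      have h4 : eLpNorm (⇑ψ) p ((D n) • μ) = (D n) ^ e * eLpNorm (⇑ψ) p μ := by
        rw [eLpNorm_smul_measure_of_ne_top hp, smul_eq_mul, he]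
      have h5 : eLpNorm (⇑ψ ∘ ⇑σ) p μ ≤ (D n) ^ e * eLpNorm (⇑ψ) p μ := by
        rw [h2, ← h4]; exact h3
      have h6 : (D n) ^ e * eLpNorm (⇑ψ) p μ ≠ ⊤ :=
        ENNReal.mul_ne_top hDe_ne_top (Lp.eLpNorm_lt_top ψ).ne
      rw [h1, Lp.norm_def, ← ENNReal.toReal_mul]
      exact ENNReal.toReal_mono h6 h5
    · -- the bound is < 1
      have h7 : (D n) ^ e < 1 := ENNReal.rpow_lt_one hDn1 he_pos
      have := ENNReal.toReal_lt_toReal hDe_ne_top (by simp : (1 : ℝ≥0∞) ≠ ⊤) |>.mpr h7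
      simpa using this
  -- extract a specific n₀ ≥ 1 with ‖M^{n₀}‖ < 1
  obtain ⟨n₀, hn₀⟩ := (hnormEv.and (eventually_ge_atTop 1)).exists
  obtain ⟨⟨hb₁, hb₂⟩, hn₀1⟩ := hn₀
  have hMn₀ : ‖M ^ n₀‖ < 1 := lt_of_le_of_lt hb₁ hb₂
  -- Fekete's subadditive lemma
  set u : ℕ → ℝ := fun n => Real.log ‖M ^ n‖ with hu
  have hsub : Subadditive u := by
    intro m k
    have h1 : ‖M ^ (m + k)‖ ≤ ‖M ^ m‖ * ‖M ^ k‖ := by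
      rw [pow_add]; exact norm_mul_le _ _
    calc u (m + k) ≤ Real.log (‖M ^ m‖ * ‖M ^ k‖) :=
          Real.log_le_log (hMn_pos _) h1
      _ = u m + u k := Real.log_mul (hMn_pos m).ne' (hMn_pos k).ne'
  set C : ℝ := max ‖Tc‖ 1 with hC
  have hC1 : 1 ≤ C := le_max_right _ _
  have hTcn : ∀ n : ℕ, ‖Tc ^ n‖ ≤ C ^ n := by
    intro n
    rcases Nat.eq_zero_or_pos n with h | h
    · subst h; simp
    · calc ‖Tc ^ n‖ ≤ ‖Tc‖ ^ n := norm_pow_le' _ h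
        _ ≤ C ^ n := pow_le_pow_left₀ (norm_nonneg _) (le_max_left _ _) n
  have hlow : ∀ n : ℕ, 1 ≤ C ^ n * ‖M ^ n‖ := by
    intro n
    have hφpos : 0 < ‖φ₀‖ := norm_pos_iff.mpr hφ₀
    have h1 : ‖φ₀‖ ≤ (‖Tc ^ n‖ * ‖M ^ n‖) * ‖φ₀‖ := by
      calc ‖φ₀‖ = ‖(Tc ^ n) ((M ^ n) φ₀)‖ := by rw [hcancel]
        _ ≤ ‖Tc ^ n‖ * ‖(M ^ n) φ₀‖ := ContinuousLinearMap.le_opNorm _ _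
        _ ≤ ‖Tc ^ n‖ * (‖M ^ n‖ * ‖φ₀‖) :=
            mul_le_mul_of_nonneg_left (ContinuousLinearMap.le_opNorm _ _) (norm_nonneg _)
        _ = (‖Tc ^ n‖ * ‖M ^ n‖) * ‖φ₀‖ := by ring
    have h2 : 1 ≤ ‖Tc ^ n‖ * ‖M ^ n‖ := by
      have := le_of_mul_le_mul_right (by linarith : 1 * ‖φ₀‖ ≤ (‖Tc ^ n‖ * ‖M ^ n‖) * ‖φ₀‖) hφpos
      linarith
    calc (1 : ℝ) ≤ ‖Tc ^ n‖ * ‖M ^ n‖ := h2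
      _ ≤ C ^ n * ‖M ^ n‖ := mul_le_mul_of_nonneg_right (hTcn n) (norm_nonneg _)
  have hbdd : BddBelow (Set.range fun n : ℕ => u n / (n : ℝ)) := by
    refine ⟨-Real.log C, ?_⟩
    rintro x ⟨n, rfl⟩
    rcases Nat.eq_zero_or_pos n with h | h
    · subst h
      have hle : -Real.log C ≤ 0 := neg_nonpos.mpr (Real.log_nonneg hC1)
      simpa using hle
    · have h1 : 0 ≤ Real.log (C ^ n * ‖M ^ n‖) :=
        Real.log_nonneg (hlow n)
      rw [Real.log_mul (by positivity : C ^ n ≠ 0) (hMn_pos n).ne', Real.log_pow] at h1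
      have hn' : (0 : ℝ) < n := by exact_mod_cast h
      rw [le_div_iff₀ hn']
      simp only [hu]
      linarith [h1]
  have hlim_neg : hsub.lim < 0 := by
    have h1 : hsub.lim ≤ u n₀ / (n₀ : ℝ) :=
      hsub.lim_le_div hbdd (Nat.one_le_iff_ne_zero.mp hn₀1)
    have hn₀pos : (0 : ℝ) < n₀ := by exact_mod_cast hn₀1
    have h2 : u n₀ < 0 := Real.log_neg (hMn_pos n₀) hMn₀
    exact lt_of_le_of_lt h1 (div_neg_of_neg_of_pos h2 hn₀pos)
  refine ⟨Real.exp hsub.lim, ?_, ?_⟩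
  · calc Real.exp hsub.lim < Real.exp 0 := Real.exp_lt_exp.mpr hlim_neg
      _ = 1 := Real.exp_zero
  · have htl := hsub.tendsto_lim hbdd
    have hexp : Filter.Tendsto (fun n : ℕ => Real.exp (u n / (n : ℝ))) atTop
        (nhds (Real.exp hsub.lim)) := (Real.continuous_exp.tendsto _).comp htl
    refine hexp.congr' ?_
    filter_upwards [eventually_ge_atTop 1] with n hn
    have hn0 : (0 : ℝ) < n := by exact_mod_cast hn
    rw [Real.rpow_def_of_pos (hMn_pos n)]
    congr 1
    rw [hu]
    ring

end GHShadow
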